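/- For a regular k-jet γ ∈ J_k^{reg}(1,n) with normalized derivatives v_i = γ^{(i)}/i!, the orthogonal complement of the solution space S_γ^{k,1} = {Ψ ∈ J_k(n,1) : Ψ∘γ = 0} in J_k(n,1)* ≅ Sym^{≤k}ℂⁿ is the k-dimensional span of the vectors v₁, v₂+v₁², v₃+2v₁v₂+v₁³, ..., Σ_{i₁+...+i_r = k} v_{i₁}⋯v_{i_r}. -/

import Mathlib

noncomputable section

/-- The linear polynomial `Σ_j w_j x_j` associated to a vector `w ∈ ℂⁿ`. -/
def linOf (n : ℕ) (w : Fin n → ℂ) : MvPolynomial (Fin n) ℂ :=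
  ∑ j, MvPolynomial.C (w j) * MvPolynomial.X j

/-- `g_m = Σ_{i₁+⋯+i_r = m, i_t ≥ 1} v_{i₁}⋯v_{i_r}`, an element of `Sym^{≤k}ℂⁿ`
modelled inside `ℂ[x₁,…,x_n]`. -/
def gvec (n : ℕ) (v : ℕ → Fin n → ℂ) (m : ℕ) : MvPolynomial (Fin n) ℂ :=
  ∑ r ∈ Finset.Icc 1 m,
    ∑ a ∈ (Finset.Nat.antidiagonalTuple r m).filter (fun a => ∀ i, 0 < a i),
      ∏ i, linOf n (v (a i))

/-- The duality pairing between `J_k(n,1)` and `Sym^{≤k}ℂⁿ` (both modelled as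
polynomials without constant term): `⟨x^α, x^α⟩ = α!/|α|!`, so that the `m`-th
coefficient of `Ψ∘γ` equals `⟨Ψ, g_m⟩ = Ψ^{(r)}`-polarizations evaluated on the `v`'s. -/
def jetPairing (n : ℕ) (P Q : MvPolynomial (Fin n) ℂ) : ℂ :=
  ∑ α ∈ Q.support,
    (((∏ j, Nat.factorial (α j) : ℕ) : ℂ) / ((Nat.factorial (∑ j, α j) : ℕ) : ℂ))
      * P.coeff α * Q.coeff α

/-- The curve jet `γ_j(z) = Σ_{i=1}^k v_{i,j} z^i`. -/
def curveOf (n k : ℕ) (v : ℕ → Fin n → ℂ) : Fin n → Polynomial ℂ :=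
  fun j => ∑ i ∈ Finset.Icc 1 k, Polynomial.C (v i j) * Polynomial.X ^ i


open Finset MvPolynomial

/-- the coefficient `α!/|α|!` -/
def cc {n : ℕ} (α : Fin n →₀ ℕ) : ℂ :=
  (((∏ j, Nat.factorial (α j) : ℕ) : ℂ) / ((Nat.factorial (∑ j, α j) : ℕ) : ℂ))

lemma cc_ne_zero {n : ℕ} (α : Fin n →₀ ℕ) : cc α ≠ 0 := by
  apply div_ne_zero
  · exact Nat.cast_ne_zero.mpr (Finset.prod_ne_zero_iff.mpr
      (fun j _ => Nat.factorial_ne_zero _))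
  · exact Nat.cast_ne_zero.mpr (Nat.factorial_ne_zero _)

lemma jetPairing_eq_sum {n : ℕ} (P Q : MvPolynomial (Fin n) ℂ)
    (s : Finset (Fin n →₀ ℕ)) (hs : Q.support ⊆ s) :
    jetPairing n P Q = ∑ α ∈ s, cc α * P.coeff α * Q.coeff α := by
  rw [jetPairing]
  exact Finset.sum_subset hs (fun α _ hα => by
    rw [MvPolynomial.notMem_support_iff] at hα
    simp [hα])

def Bform (n : ℕ) : LinearMap.BilinForm ℂ (MvPolynomial (Fin n) ℂ) :=
  LinearMap.mk₂ ℂ (jetPairing n)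
    (fun P P' Q => by
      simp only [jetPairing, coeff_add]
      rw [← Finset.sum_add_distrib]
      exact Finset.sum_congr rfl fun α _ => by ring)
    (fun c P Q => by
      simp only [jetPairing, coeff_smul, smul_eq_mul, Finset.mul_sum]
      exact Finset.sum_congr rfl fun α _ => by ring)
    (fun P Q Q' => by
      classical
      rw [jetPairing_eq_sum P (Q + Q') (Q.support ∪ Q'.support)
          (MvPolynomial.support_add),
        jetPairing_eq_sum P Q (Q.support ∪ Q'.support) Finset.subset_union_left,
        jetPairing_eq_sum P Q' (Q.support ∪ Q'.support) Finset.subset_union_right,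
        ← Finset.sum_add_distrib]
      exact Finset.sum_congr rfl fun α _ => by rw [coeff_add]; ring)
    (fun c P Q => by
      rw [jetPairing_eq_sum P (c • Q) Q.support (MvPolynomial.support_smul),
        jetPairing, smul_eq_mul, Finset.mul_sum]
      exact Finset.sum_congr rfl fun α _ => by
        rw [coeff_smul, smul_eq_mul]; unfold cc; ring)

@[simp] lemma Bform_apply {n : ℕ} (P Q : MvPolynomial (Fin n) ℂ) :
    Bform n P Q = jetPairing n P Q := rfl

lemma jetPairing_symm {n : ℕ} (P Q : MvPolynomial (Fin n) ℂ) :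
    jetPairing n P Q = jetPairing n Q P := by
  rw [jetPairing_eq_sum P Q (P.support ∪ Q.support) Finset.subset_union_right,
    jetPairing_eq_sum Q P (P.support ∪ Q.support) Finset.subset_union_left]
  exact Finset.sum_congr rfl fun α _ => by ring

lemma jetPairing_monomial_left {n : ℕ} (α : Fin n →₀ ℕ) (c : ℂ)
    (Q : MvPolynomial (Fin n) ℂ) :
    jetPairing n (monomial α c) Q = c * (cc α * Q.coeff α) := by
  classical
  rw [jetPairing_eq_sum _ Q (Q.support ∪ {α}) Finset.subset_union_left]
  rw [Finset.sum_eq_single α]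
  · rw [coeff_monomial, if_pos rfl]; ring
  · intro β _ hβ
    rw [coeff_monomial, if_neg (fun h => hβ h.symm)]
    ring
  · intro h
    exact absurd (Finset.mem_union_right _ (Finset.mem_singleton_self α)) h

/-- count function of a tuple -/
def cntF {n r : ℕ} (f : Fin r → Fin n) : Fin n →₀ ℕ := ∑ t, Finsupp.single (f t) 1

lemma cntF_apply {n r : ℕ} (f : Fin r → Fin n) (x : Fin n) :
    cntF f x = (univ.filter fun t => f t = x).card := by
  classical
  rw [cntF, Finset.sum_apply', Finset.card_filter]
  exact Finset.sum_congr rfl fun t _ => by rw [Finsupp.single_apply]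

lemma card_fiber_eq {n r : ℕ} (f : Fin r → Fin n) (x : Fin n) :
    Fintype.card {t // f t = x} = cntF f x := by
  classical
  rw [cntF_apply, Fintype.card_subtype]

lemma sum_cntF {n r : ℕ} (f : Fin r → Fin n) : ∑ j, cntF f j = r := by
  classical
  simp only [cntF, Finset.sum_apply']
  rw [Finset.sum_comm]
  have : ∀ t : Fin r, ∑ j, (Finsupp.single (f t) (1:ℕ)) j = 1 := by
    intro t
    simp [Finsupp.single_apply]
  simp [this]

lemma cntF_comp_perm {n r : ℕ} (f : Fin r → Fin n) (σ : Equiv.Perm (Fin r)) :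
    cntF (f ∘ σ) = cntF f := by
  rw [cntF, cntF]
  exact Equiv.sum_comp σ (fun t => Finsupp.single (f t) 1)

lemma exists_perm {n r : ℕ} {f g : Fin r → Fin n} (h : cntF f = cntF g) :
    ∃ σ : Equiv.Perm (Fin r), f = g ∘ σ := by
  classical
  have hc : ∀ x, Fintype.card {t // f t = x} = Fintype.card {t // g t = x} := by
    intro x; rw [card_fiber_eq, card_fiber_eq, h]
  let e : ∀ x, {t // f t = x} ≃ {t // g t = x} := fun x => Fintype.equivOfCardEq (hc x)
  refine ⟨(Equiv.sigmaFiberEquiv f).symm.trans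
    ((Equiv.sigmaCongrRight e).trans (Equiv.sigmaFiberEquiv g)), funext fun t => ?_⟩
  simp only [Function.comp_apply, Equiv.trans_apply]
  have h1 : (Equiv.sigmaFiberEquiv f).symm t = ⟨f t, t, rfl⟩ := rfl
  rw [h1]
  have h2 : (Equiv.sigmaCongrRight e) ⟨f t, t, rfl⟩ = ⟨f t, e (f t) ⟨t, rfl⟩⟩ := rfl
  rw [h2]
  exact ((e (f t)) ⟨t, rfl⟩).2.symm

lemma card_F {n r : ℕ} (α : Fin n →₀ ℕ) (f0 : Fin r → Fin n) (h0 : cntF f0 = α) :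
    Nat.factorial r
      = (univ.filter fun f : Fin r → Fin n => cntF f = α).card * ∏ j, Nat.factorial (α j) := by
  classical
  have hmap : ∀ σ : Equiv.Perm (Fin r), σ ∈ (univ : Finset (Equiv.Perm (Fin r))) →
      f0 ∘ σ ∈ (univ.filter fun f : Fin r → Fin n => cntF f = α) := by
    intro σ _
    rw [Finset.mem_filter]
    exact ⟨Finset.mem_univ _, by rw [cntF_comp_perm, h0]⟩
  have hcard := Finset.card_eq_sum_card_fiberwise hmap
  have hstab : (univ.filter fun σ : Equiv.Perm (Fin r) => f0 ∘ σ = f0).card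
      = ∏ j, Nat.factorial (α j) := by
    rw [← Fintype.card_subtype, DomMulAct.stabilizer_card]
    exact Finset.prod_congr rfl fun j _ => by rw [card_fiber_eq, h0]
  have hfib : ∀ f ∈ (univ.filter fun f : Fin r → Fin n => cntF f = α),
      (univ.filter fun σ : Equiv.Perm (Fin r) => f0 ∘ σ = f).card
        = ∏ j, Nat.factorial (α j) := by
    intro f hf
    rw [Finset.mem_filter] at hf
    obtain ⟨σf, hσf⟩ := exists_perm (hf.2.trans h0.symm)
    rw [← hstab]
    apply Finset.card_bij (fun σ _ => σ * σf⁻¹)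
    · intro σ hσ
      rw [Finset.mem_filter] at hσ ⊢
      refine ⟨Finset.mem_univ _, funext fun t => ?_⟩
      have h2 := congrFun hσ.2 (σf⁻¹ t)
      have h3 := congrFun hσf (σf⁻¹ t)
      simp only [Function.comp_apply, Equiv.Perm.mul_apply] at h2 h3 ⊢
      rw [h2, h3, ← Equiv.Perm.mul_apply, mul_inv_cancel, Equiv.Perm.one_apply]
    · intro σ₁ _ σ₂ _ hh
      exact mul_right_cancel hh
    · intro σ hσ
      rw [Finset.mem_filter] at hσ
      refine ⟨σ * σf, Finset.mem_filter.mpr ⟨Finset.mem_univ _, funext fun t => ?_⟩, by group⟩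
      have h2 := congrFun hσ.2 (σf t)
      have h3 := congrFun hσf t
      simp only [Function.comp_apply, Equiv.Perm.mul_apply] at h2 h3 ⊢
      rw [h2, ← h3]
  have hcp : Fintype.card (Equiv.Perm (Fin r)) = Nat.factorial r := by
    rw [Fintype.card_perm, Fintype.card_fin]
  rw [← hcp, ← Finset.card_univ, hcard,
    Finset.sum_congr rfl hfib, Finset.sum_const, smul_eq_mul]

lemma prod_X_monomial {n r : ℕ} (s : Finset (Fin r)) (h : Fin r → Fin n) :
    (∏ t ∈ s, (X (h t) : MvPolynomial (Fin n) ℂ))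
      = monomial (∑ t ∈ s, Finsupp.single (h t) 1) 1 := by
  classical
  induction s using Finset.cons_induction with
  | empty => simp [MvPolynomial.C_apply.symm]
  | cons a s ha ih =>
      rw [Finset.prod_cons, Finset.sum_cons, ih]
      have hx : (X (h a) : MvPolynomial (Fin n) ℂ) = monomial (Finsupp.single (h a) 1) 1 := by
        rw [← X_pow_eq_monomial, pow_one]
      rw [hx, monomial_mul, one_mul]

/-- K1: coefficient of a product of linear forms -/
lemma coeff_prod_linOf {n r : ℕ} (w : Fin r → Fin n → ℂ) (α : Fin n →₀ ℕ) :
    MvPolynomial.coeff α (∏ t, linOf n (w t))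
      = ∑ f ∈ univ.filter (fun f : Fin r → Fin n => cntF f = α), ∏ t, w t (f t) := by
  classical
  unfold linOf
  rw [Finset.prod_univ_sum, Fintype.piFinset_univ, MvPolynomial.coeff_sum,
    Finset.sum_filter]
  refine Finset.sum_congr rfl fun f _ => ?_
  rw [Finset.prod_mul_distrib, ← map_prod, prod_X_monomial univ f, ← cntF,
    MvPolynomial.coeff_C_mul, MvPolynomial.coeff_monomial]
  by_cases h : cntF f = α
  · rw [if_pos h, if_pos h, mul_one]
  · rw [if_neg h, if_neg h, mul_zero]

lemma prod_pow_count {n : ℕ} (γ : Fin n → Polynomial ℂ) (M : Multiset (Fin n)) :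
    ∏ j, γ j ^ (M.count j) = (M.map γ).prod := by
  classical
  induction M using Multiset.induction with
  | empty => simp
  | cons a M ih =>
      rw [Multiset.map_cons, Multiset.prod_cons, ← ih]
      have : ∀ j, γ j ^ (a ::ₘ M).count j
          = γ j ^ (M.count j) * (if j = a then γ j else 1) := by
        intro j
        rw [Multiset.count_cons, pow_add]
        congr 1
        by_cases h : j = a <;> simp [h]
      rw [Finset.prod_congr rfl fun j _ => this j, Finset.prod_mul_distrib,
        Finset.prod_ite_eq' univ a γ, if_pos (Finset.mem_univ a), mul_comm]

lemma prod_pow_eq_prod_tuple {n : ℕ} (γ : Fin n → Polynomial ℂ) (α : Fin n →₀ ℕ) :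
    (∏ j, γ j ^ α j)
      = ∏ t : Fin (α.toMultiset.toList.length), γ (α.toMultiset.toList.get t) := by
  classical
  have h1 : ∀ j, α j = Multiset.count j α.toMultiset :=
    fun j => (Finsupp.count_toMultiset α j).symm
  rw [Finset.prod_congr rfl (fun j _ => by rw [h1 j]), prod_pow_count]
  conv_lhs => rw [← Multiset.coe_toList α.toMultiset]
  rw [Multiset.map_coe, Multiset.prod_coe, ← List.ofFn_getElem_eq_map, List.prod_ofFn]
  rfl

lemma cntF_list {n : ℕ} (l : List (Fin n)) : cntF l.get = Multiset.toFinsupp (↑l : Multiset (Fin n)) := by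
  classical
  induction l with
  | nil => ext j; simp [cntF]
  | cons a l ih =>
      have : cntF (a :: l).get = Finsupp.single a 1 + cntF l.get := by
        show (∑ t : Fin (l.length + 1), Finsupp.single ((a :: l).get t) 1) = _
        rw [Fin.sum_univ_succ]
        rfl
      rw [this, ih]
      ext j
      simp only [Finsupp.add_apply, Finsupp.single_apply, Multiset.toFinsupp_apply,
        Multiset.coe_count, List.count_cons]
      by_cases h : a = j <;> simp [h, beq_iff_eq, add_comm]

lemma cntF_get {n : ℕ} (α : Fin n →₀ ℕ) :
    cntF (fun t : Fin (α.toMultiset.toList.length) => α.toMultiset.toList.get t) = α := by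
  classical
  have := cntF_list (α.toMultiset.toList)
  rw [show (fun t : Fin (α.toMultiset.toList.length) => α.toMultiset.toList.get t)
      = α.toMultiset.toList.get from rfl, this, Multiset.coe_toList,
    Finsupp.toMultiset_toFinsupp]

lemma ATpos_empty {r m : ℕ} (h : m < r) :
    (Finset.Nat.antidiagonalTuple r m).filter (fun a => ∀ i, 0 < a i) = ∅ := by
  rw [Finset.filter_eq_empty_iff]
  intro a ha hpos
  rw [Finset.Nat.mem_antidiagonalTuple] at ha
  have h2 : r ≤ ∑ i, a i := by
    calc r = ∑ _i : Fin r, 1 := by simp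
    _ ≤ ∑ i, a i := Finset.sum_le_sum fun i _ => hpos i
  omega

/-- Step C: coefficient of the product of curve components -/
lemma coeff_prod_curve {n k r m : ℕ} (hmk : m ≤ k) (v : ℕ → Fin n → ℂ) (f0 : Fin r → Fin n) :
    (∏ t, curveOf n k v (f0 t)).coeff m
      = ∑ a ∈ (Finset.Nat.antidiagonalTuple r m).filter (fun a => ∀ i, 0 < a i),
          ∏ t, v (a t) (f0 t) := by
  classical
  unfold curveOf
  rw [Finset.prod_univ_sum, Polynomial.finset_sum_coeff]
  have hterm : ∀ a : Fin r → ℕ,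
      (∏ t, Polynomial.C (v (a t) (f0 t)) * Polynomial.X ^ (a t)).coeff m
        = if ∑ t, a t = m then ∏ t, v (a t) (f0 t) else 0 := by
    intro a
    rw [Finset.prod_mul_distrib, ← map_prod, Finset.prod_pow_eq_pow_sum,
      Polynomial.coeff_C_mul, Polynomial.coeff_X_pow]
    by_cases h : (∑ t, a t) = m
    · rw [if_pos h, if_pos h.symm, mul_one]
    · rw [if_neg h, if_neg (fun hh => h hh.symm), mul_zero]
  rw [Finset.sum_congr rfl fun a _ => hterm a, ← Finset.sum_filter]
  apply Finset.sum_congr _ (fun a _ => rfl)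
  ext a
  simp only [Finset.mem_filter, Fintype.mem_piFinset, Finset.mem_Icc,
    Finset.Nat.mem_antidiagonalTuple]
  constructor
  · rintro ⟨h1, h2⟩
    exact ⟨h2, fun i => (h1 i).1⟩
  · rintro ⟨h2, h1⟩
    refine ⟨fun i => ⟨h1 i, ?_⟩, h2⟩
    calc a i ≤ ∑ t, a t := Finset.single_le_sum (fun t _ => Nat.zero_le _) (Finset.mem_univ i)
    _ ≤ k := by omega

lemma monomial_case {n k : ℕ} (v : ℕ → Fin n → ℂ) {m : ℕ} (hmk : m ≤ k)
    (α : Fin n →₀ ℕ) (hα : α ≠ 0) :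
    (∏ j, (curveOf n k v j) ^ α j).coeff m = cc α * (gvec n v m).coeff α := by
  classical
  set r := α.toMultiset.toList.length with hr
  set f0 : Fin r → Fin n := α.toMultiset.toList.get with hf0def
  have hf0 : cntF f0 = α := cntF_get α
  have hsum : ∑ j, α j = r := by rw [← hf0]; exact sum_cntF f0
  set ATP := fun r' => (Finset.Nat.antidiagonalTuple r' m).filter (fun a => ∀ i, 0 < a i)
    with hATP
  set S0 := ∑ a ∈ ATP r, ∏ t, v (a t) (f0 t) with hS0
  set F := univ.filter (fun f : Fin r → Fin n => cntF f = α) with hF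
  have hr1 : 1 ≤ r := by
    rcases Nat.eq_zero_or_pos r with h | h
    · exfalso; apply hα
      ext j
      have h2 : ∑ j, α j = 0 := by rw [hsum, h]
      simpa using (Finset.sum_eq_zero_iff.mp h2) j (Finset.mem_univ j)
    · exact h
  have hLHS : (∏ j, (curveOf n k v j) ^ α j).coeff m = S0 := by
    rw [prod_pow_eq_prod_tuple (curveOf n k v) α]
    exact coeff_prod_curve hmk v f0
  have hcollapse : ∀ r', r' ≠ r →
      (∑ a ∈ ATP r', MvPolynomial.coeff α (∏ t : Fin r', linOf n (v (a t)))) = 0 := by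
    intro r' hne
    apply Finset.sum_eq_zero; intro a _
    rw [coeff_prod_linOf]
    apply Finset.sum_eq_zero; intro f hf
    exfalso
    rw [Finset.mem_filter] at hf
    have h2 := sum_cntF f
    rw [hf.2, hsum] at h2
    exact hne h2.symm
  have hG : MvPolynomial.coeff α (gvec n v m)
      = ∑ a ∈ ATP r, ∑ f ∈ F, ∏ t, v (a t) (f t) := by
    rw [gvec, MvPolynomial.coeff_sum,
      Finset.sum_congr rfl (fun r' _ => MvPolynomial.coeff_sum _ _ _)]
    rw [Finset.sum_eq_single r (fun r' _ hne => hcollapse r' hne)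
      (fun hnot => by
        have hmr : m < r := by
          rw [Finset.mem_Icc] at hnot; omega
        rw [show ATP r = ∅ from ATpos_empty hmr, Finset.sum_empty])]
    exact Finset.sum_congr rfl fun a _ => coeff_prod_linOf _ _
  have hper : ∀ f ∈ F, (∑ a ∈ ATP r, ∏ t, v (a t) (f t)) = S0 := by
    intro f hf
    rw [Finset.mem_filter] at hf
    obtain ⟨σ, hσ⟩ := exists_perm (hf.2.trans hf0.symm)
    rw [hS0]
    apply Finset.sum_nbij' (fun a => a ∘ ⇑σ⁻¹) (fun a => a ∘ ⇑σ)
    · intro a ha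
      rw [hATP, Finset.mem_filter, Finset.Nat.mem_antidiagonalTuple] at ha ⊢
      exact ⟨by rw [← ha.1]; exact Equiv.sum_comp σ⁻¹ a, fun i => ha.2 _⟩
    · intro a ha
      rw [hATP, Finset.mem_filter, Finset.Nat.mem_antidiagonalTuple] at ha ⊢
      exact ⟨by rw [← ha.1]; exact Equiv.sum_comp σ a, fun i => ha.2 _⟩
    · intro a _; funext t; simp
    · intro a _; funext t; simp
    · intro a _
      rw [hσ]
      have h5 := Equiv.prod_comp σ (fun t => v (a (σ⁻¹ t)) (f0 t))
      simp only [Equiv.symm_apply_apply, ← Equiv.Perm.mul_apply, inv_mul_cancel, Equiv.Perm.one_apply] at h5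
      simpa [Function.comp] using h5
  have hGG : MvPolynomial.coeff α (gvec n v m) = (F.card : ℂ) * S0 := by
    rw [hG, Finset.sum_comm, Finset.sum_congr rfl hper, Finset.sum_const, nsmul_eq_mul]
  have hcount := card_F α f0 hf0
  have hcc : cc α * (F.card : ℂ) = 1 := by
    rw [cc, hsum]
    rw [div_mul_eq_mul_div]
    rw [div_eq_one_iff_eq (by exact_mod_cast Nat.factorial_ne_zero r)]
    exact_mod_cast (Nat.mul_comm _ _).trans hcount.symm
  rw [hLHS, hGG, ← mul_assoc, hcc, one_mul]

lemma key_identity {n k : ℕ} (v : ℕ → Fin n → ℂ) {m : ℕ} (hm : m ∈ Finset.Icc 1 k)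
    (Ψ : MvPolynomial (Fin n) ℂ) (hΨ : MvPolynomial.coeff 0 Ψ = 0) :
    ((MvPolynomial.aeval (curveOf n k v)) Ψ).coeff m = jetPairing n Ψ (gvec n v m) := by
  classical
  obtain ⟨hm1, hmk⟩ := Finset.mem_Icc.mp hm
  have hrw : jetPairing n Ψ (gvec n v m) = Bform n Ψ (gvec n v m) := rfl
  rw [hrw]
  conv_lhs => rw [← MvPolynomial.support_sum_monomial_coeff Ψ]
  conv_rhs => rw [← MvPolynomial.support_sum_monomial_coeff Ψ]
  rw [map_sum (MvPolynomial.aeval (curveOf n k v)), Polynomial.finset_sum_coeff,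
    map_sum (Bform n), LinearMap.sum_apply]
  refine Finset.sum_congr rfl fun α hα => ?_
  have hα0 : α ≠ 0 := by
    rintro rfl
    exact (MvPolynomial.mem_support_iff.mp hα) hΨ
  rw [MvPolynomial.aeval_monomial]
  have hprod : (α.prod fun j e => curveOf n k v j ^ e) = ∏ j, curveOf n k v j ^ α j :=
    Finsupp.prod_fintype _ _ (fun j => pow_zero _)
  rw [hprod, Polynomial.algebraMap_eq, Polynomial.coeff_C_mul]
  rw [monomial_case v hmk α hα0]
  rw [Bform_apply, jetPairing_monomial_left]

def Wsp (n k : ℕ) : Submodule ℂ (MvPolynomial (Fin n) ℂ) where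
  carrier := {Q | Q.totalDegree ≤ k ∧ MvPolynomial.coeff 0 Q = 0}
  add_mem' := fun {a b} ha hb =>
    ⟨le_trans (MvPolynomial.totalDegree_add a b) (max_le ha.1 hb.1),
      by rw [MvPolynomial.coeff_add, ha.2, hb.2, add_zero]⟩
  zero_mem' := ⟨by simp, by simp⟩
  smul_mem' := fun c x hx =>
    ⟨le_trans (MvPolynomial.totalDegree_smul_le c x) hx.1,
      by rw [MvPolynomial.coeff_smul, hx.2, smul_zero]⟩

lemma mem_Wsp {n k : ℕ} {Q : MvPolynomial (Fin n) ℂ} :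
    Q ∈ Wsp n k ↔ Q.totalDegree ≤ k ∧ MvPolynomial.coeff 0 Q = 0 := Iff.rfl

lemma fd_Wsp (n k : ℕ) : FiniteDimensional ℂ (Wsp n k) :=
  Submodule.finiteDimensional_of_le (S₂ := restrictTotalDegree (Fin n) ℂ k)
    (fun Q hQ => (MvPolynomial.mem_restrictTotalDegree _ _ _).mpr hQ.1)

lemma linOf_totalDegree {n : ℕ} (w : Fin n → ℂ) : (linOf n w).totalDegree ≤ 1 := by
  refine le_trans (MvPolynomial.totalDegree_finset_sum _ _) (Finset.sup_le fun j _ => ?_)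
  refine le_trans (MvPolynomial.totalDegree_mul _ _) ?_
  simp [MvPolynomial.totalDegree_C, MvPolynomial.totalDegree_X]

lemma gvec_mem_Wsp {n k : ℕ} (v : ℕ → Fin n → ℂ) {m : ℕ} (hm : m ∈ Finset.Icc 1 k) :
    gvec n v m ∈ Wsp n k := by
  classical
  obtain ⟨hm1, hmk⟩ := Finset.mem_Icc.mp hm
  constructor
  · refine le_trans (MvPolynomial.totalDegree_finset_sum _ _) (Finset.sup_le fun r' hr' => ?_)
    refine le_trans (MvPolynomial.totalDegree_finset_sum _ _) (Finset.sup_le fun a _ => ?_)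
    refine le_trans (MvPolynomial.totalDegree_finset_prod _ _) ?_
    refine le_trans (Finset.sum_le_sum fun t _ => linOf_totalDegree (v (a t))) ?_
    rw [Finset.mem_Icc] at hr'
    simpa using le_trans hr'.2 hmk
  · rw [gvec, MvPolynomial.coeff_sum]
    apply Finset.sum_eq_zero; intro r' hr'
    rw [MvPolynomial.coeff_sum]
    apply Finset.sum_eq_zero; intro a _
    rw [Finset.mem_Icc] at hr'
    have hcc0 : MvPolynomial.constantCoeff (∏ t : Fin r', linOf n (v (a t))) = 0 := by
      rw [map_prod]
      refine Finset.prod_eq_zero (Finset.mem_univ (⟨0, hr'.1⟩ : Fin r')) ?_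
      rw [linOf, map_sum]
      apply Finset.sum_eq_zero; intro j _
      simp
    rw [← MvPolynomial.constantCoeff_eq] at *
    exact hcc0

/-!
STATEMENT 5: For a regular `k`-jet `γ` with normalized derivatives `v_i` (`v 1 ≠ 0`), the
orthogonal complement in `J_k(n,1)^* ≅ Sym^{≤k}ℂⁿ` of the solution space
`S_γ^{k,1} = {Ψ ∈ J_k(n,1) : Ψ∘γ = 0}` is the span of
`v₁, v₂+v₁², …, Σ_{i₁+⋯+i_r=k} v_{i₁}⋯v_{i_r}`.
-/
theorem annihilator_of_solution_space (n k : ℕ) (hk : 1 ≤ k)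
    (v : ℕ → Fin n → ℂ) (hv0 : v 0 = 0) (hv1 : v 1 ≠ 0) :
    ((Submodule.span ℂ ((fun m => gvec n v m) '' (Set.Icc 1 k)) :
        Submodule ℂ (MvPolynomial (Fin n) ℂ)) : Set (MvPolynomial (Fin n) ℂ))
      = {Q : MvPolynomial (Fin n) ℂ |
          Q.totalDegree ≤ k ∧ MvPolynomial.coeff 0 Q = 0 ∧
          ∀ Ψ : MvPolynomial (Fin n) ℂ,
            Ψ.totalDegree ≤ k → MvPolynomial.coeff 0 Ψ = 0 →
            (∀ m ∈ Finset.Icc 1 k,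
              ((MvPolynomial.aeval (curveOf n k v)) Ψ).coeff m = 0) →
            jetPairing n Ψ Q = 0} := by
  classical
  haveI : FiniteDimensional ℂ (Wsp n k) := fd_Wsp n k
  set W := Wsp n k with hWdef
  set Bw := (Bform n).restrict W with hBwdef
  have hBw : ∀ x y : W, Bw x y = jetPairing n (x : MvPolynomial (Fin n) ℂ) y :=
    fun x y => rfl
  have hrefl : Bw.IsRefl := by
    intro x y h
    rw [hBw] at h ⊢
    rw [jetPairing_symm]; exact h
  have hnd : Bw.Nondegenerate := by
    refine (LinearMap.IsRefl.nondegenerate_iff_separatingLeft hrefl).mpr ?_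
    intro x h
    have hx2 : ∀ α, MvPolynomial.coeff α (x : MvPolynomial (Fin n) ℂ) = 0 := by
      intro α
      by_cases h0 : MvPolynomial.coeff α (x : MvPolynomial (Fin n) ℂ) = 0
      · exact h0
      by_cases hα0 : α = 0
      · subst hα0; exact (mem_Wsp.mp x.2).2
      have hαsupp : α ∈ (x : MvPolynomial (Fin n) ℂ).support :=
        MvPolynomial.mem_support_iff.mpr h0
      have hmono : (MvPolynomial.monomial α (1:ℂ)) ∈ W := by
        constructor
        · rw [MvPolynomial.totalDegree_monomial _ one_ne_zero]
          exact le_trans (MvPolynomial.le_totalDegree hαsupp) (mem_Wsp.mp x.2).1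
        · rw [MvPolynomial.coeff_monomial, if_neg hα0]
      have h1 := h ⟨_, hmono⟩
      rw [hBw, jetPairing_symm, jetPairing_monomial_left, one_mul] at h1
      exact absurd ((mul_eq_zero.mp h1).resolve_left (cc_ne_zero α)) h0
    exact Subtype.ext (MvPolynomial.ext _ _ fun α => by
      rw [hx2]; exact (MvPolynomial.coeff_zero α).symm)
  set S : Set (MvPolynomial (Fin n) ℂ) := (fun m => gvec n v m) '' (Set.Icc 1 k) with hS
  set S' : Set W := {x : W | (x : MvPolynomial (Fin n) ℂ) ∈ S} with hS'
  have hSsubW : S ⊆ (W : Set (MvPolynomial (Fin n) ℂ)) := by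
    rintro _ ⟨m, hm, rfl⟩
    exact gvec_mem_Wsp v (Finset.mem_Icc.mpr (Set.mem_Icc.mp hm))
  have hSval : (W.subtype : W → MvPolynomial (Fin n) ℂ) '' S' = S := by
    apply Set.Subset.antisymm
    · rintro _ ⟨x, hx, rfl⟩; exact hx
    · rintro x hx
      exact ⟨⟨x, hSsubW hx⟩, hx, rfl⟩
  have hspan : Submodule.span ℂ S = Submodule.map W.subtype (Submodule.span ℂ S') := by
    rw [Submodule.map_span, hSval]
  have horth : ∀ Ψ : W, (Ψ ∈ Bw.orthogonal (Submodule.span ℂ S')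
      ↔ ∀ m ∈ Finset.Icc 1 k,
        ((MvPolynomial.aeval (curveOf n k v)) (Ψ : MvPolynomial (Fin n) ℂ)).coeff m = 0) := by
    intro Ψ
    constructor
    · intro h m hm
      have hg : (⟨gvec n v m, gvec_mem_Wsp v hm⟩ : W) ∈ Submodule.span ℂ S' :=
        Submodule.subset_span (show _ ∈ S' from
          ⟨m, Set.mem_Icc.mpr (Finset.mem_Icc.mp hm), rfl⟩)
      have h2 := h _ hg
      rw [hBw] at h2
      rw [key_identity v hm _ (mem_Wsp.mp Ψ.2).2, jetPairing_symm]
      exact h2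
    · intro h y hy
      have hle : Submodule.span ℂ S' ≤ LinearMap.ker (Bw.flip Ψ) := by
        rw [Submodule.span_le]
        rintro x ⟨m, hm, hxm⟩
        rw [SetLike.mem_coe, LinearMap.mem_ker]
        show Bw x Ψ = 0
        rw [hBw]
        have hmI : m ∈ Finset.Icc 1 k := Finset.mem_Icc.mpr (Set.mem_Icc.mp hm)
        have hxv : (x : MvPolynomial (Fin n) ℂ) = gvec n v m := hxm.symm
        rw [hxv, jetPairing_symm, ← key_identity v hmI _ (mem_Wsp.mp Ψ.2).2]
        exact h m hmI
      have h6 := hle hy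
      rw [LinearMap.mem_ker] at h6
      exact h6
  ext Q
  simp only [Set.mem_setOf_eq, SetLike.mem_coe]
  constructor
  · intro hQ
    have hQW : Q ∈ W := by
      have : Submodule.span ℂ S ≤ W := Submodule.span_le.mpr hSsubW
      exact this hQ
    refine ⟨(mem_Wsp.mp hQW).1, (mem_Wsp.mp hQW).2, ?_⟩
    intro Ψ hdeg h0 hvan
    have hQ' : (⟨Q, hQW⟩ : W) ∈ Submodule.span ℂ S' := by
      rw [hspan] at hQ
      obtain ⟨y, hy, hyQ⟩ := hQ
      have : y = (⟨Q, hQW⟩ : W) := Subtype.ext hyQ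
      rwa [this] at hy
    have hΨW : (⟨Ψ, mem_Wsp.mpr ⟨hdeg, h0⟩⟩ : W) ∈ Bw.orthogonal (Submodule.span ℂ S') :=
      (horth _).mpr hvan
    have h3 := hΨW _ hQ'
    rw [hBw] at h3
    rw [jetPairing_symm]
    exact h3
  · rintro ⟨hdeg, h0, hann⟩
    have hQW : Q ∈ W := mem_Wsp.mpr ⟨hdeg, h0⟩
    have hdouble := LinearMap.BilinForm.orthogonal_orthogonal hnd hrefl (Submodule.span ℂ S')
    have hQ' : (⟨Q, hQW⟩ : W) ∈ Bw.orthogonal (Bw.orthogonal (Submodule.span ℂ S')) := by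
      intro y hy
      rw [hBw]
      exact hann (y : MvPolynomial (Fin n) ℂ) (mem_Wsp.mp y.2).1 (mem_Wsp.mp y.2).2
        ((horth y).mp hy)
    rw [hdouble] at hQ'
    rw [hspan]
    exact ⟨⟨Q, hQW⟩, hQ', rfl⟩

end
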